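/- (Unconditional per-step stability of the alternative scheme.) Let I = ℝ/ℤ, J ≥ 3, h = 1/J, Δt > 0, and let X^m, X^{m+1} ∈ [V^h]² satisfy ((X^m·e₁)² D_t X^{m+1}, η |X^m_ρ|²) + ((X^m·e₁)² X^{m+1}_ρ, η_ρ) + (X^{m+1}·e₁, η·e₁ |X^{m+1}_ρ|²) = 0 for all η ∈ [V^h]², where D_t X^{m+1} = (X^{m+1} − X^m)/Δt. Then ½ ((X^{m+1}·e₁)², |X^{m+1}_ρ|²) + Δt ((X^m·e₁)² |D_t X^{m+1}|², |X^m_ρ|²) ≤ ½ ((X^m·e₁)², |X^m_ρ|²). -/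

import Mathlib

/- STATEMENT 4: Unconditional per-step stability (eq. (4.6) of the paper) of the
alternative fully discrete scheme `(Q^{h,Δt})` for axisymmetric mean curvature flow
on `I = ℝ/ℤ`. -/

open MeasureTheory Real Set
open scoped RealInnerProductSpace

noncomputable section

abbrev E2 := EuclideanSpace ℝ (Fin 2)

def e1 : E2 := EuclideanSpace.single 0 1

/-- The periodic piecewise affine finite element space `[V^h]²`: continuous 1-periodic
functions that are affine on each subinterval `[j/J, (j+1)/J]` of `[0,1]`. -/
def Vh (J : ℕ) : Set (ℝ → E2) :=
  {f | Continuous f ∧ Function.Periodic f 1 ∧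
    ∀ j : ℕ, j < J → ∃ a b : E2,
      ∀ ρ ∈ Set.Icc ((j : ℝ)/J) (((j : ℝ)+1)/J), f ρ = a + ρ • b}

/-- The scheme form of `(Q^{h,Δt})`: `((X^m·e₁)² D_t X^{m+1}, η |X^m_ρ|²)
+ ((X^m·e₁)² X^{m+1}_ρ, η_ρ) + (X^{m+1}·e₁, η·e₁ |X^{m+1}_ρ|²)`. -/
def Qform (Δt : ℝ) (Xm Xnew η : ℝ → E2) : ℝ :=
  ∫ ρ in (0:ℝ)..1,
    (⟪Xm ρ, e1⟫^2 * ⟪Δt⁻¹ • (Xnew ρ - Xm ρ), η ρ⟫ * ‖deriv Xm ρ‖^2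
      + ⟪Xm ρ, e1⟫^2 * ⟪deriv Xnew ρ, deriv η ρ⟫
      + ⟪Xnew ρ, e1⟫ * ⟪η ρ, e1⟫ * ‖deriv Xnew ρ‖^2)

lemma deriv_affine {f : ℝ → E2} {p q : ℝ} {a b : E2}
    (haff : ∀ ρ ∈ Set.Icc p q, f ρ = a + ρ • b) {ρ : ℝ} (hρ : ρ ∈ Set.Ioo p q) :
    deriv f ρ = b := by
  have hev : f =ᶠ[nhds ρ] fun x => a + x • b :=
    Filter.eventuallyEq_of_mem (Ioo_mem_nhds hρ.1 hρ.2) fun x hx =>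
      haff x (Ioo_subset_Icc_self hx)
  rw [hev.deriv_eq]
  have h : HasDerivAt (fun x : ℝ => a + x • b) b ρ := by
    simpa using ((hasDerivAt_id ρ).smul_const b).const_add a
  exact h.deriv

lemma ae_ne_real (q : ℝ) : ∀ᵐ ρ : ℝ, ρ ≠ q := by
  rw [MeasureTheory.ae_iff]
  have : {a : ℝ | ¬ a ≠ q} = {q} := by ext x; simp
  rw [this]
  exact Real.volume_singleton

lemma integrable_pieces {J : ℕ} (hJ : 0 < J) {g : ℝ → ℝ}
    (hg : ∀ j : ℕ, j < J → ∃ c : ℝ → ℝ, Continuous c ∧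
      ∀ ρ ∈ Set.Ioo ((j:ℝ)/J) (((j:ℝ)+1)/J), g ρ = c ρ) :
    IntervalIntegrable g volume 0 1 := by
  have hJ' : (0:ℝ) < J := by exact_mod_cast hJ
  have main : ∀ k : ℕ, k ≤ J → IntervalIntegrable g volume 0 ((k:ℝ)/J) := by
    intro k
    induction k with
    | zero =>
      intro _
      rw [Nat.cast_zero, zero_div]
    | succ k ih =>
      intro hk1
      have hk : k < J := hk1
      obtain ⟨c, hc, hgc⟩ := hg k hk
      have hle : (k:ℝ)/J ≤ ((k:ℝ)+1)/J := by gcongr; linarith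
      have hpiece : IntervalIntegrable g volume ((k:ℝ)/J) (((k:ℝ)+1)/J) := by
        rw [intervalIntegrable_iff, uIoc_of_le hle]
        refine ((hc.intervalIntegrable ((k:ℝ)/J) (((k:ℝ)+1)/J)).1).congr ?_
        refine (MeasureTheory.ae_restrict_iff' measurableSet_Ioc).mpr ?_
        filter_upwards [ae_ne_real (((k:ℝ)+1)/J)] with ρ hρ hmem
        exact (hgc ρ ⟨hmem.1, lt_of_le_of_ne hmem.2 hρ⟩).symm
      have hcast : ((k+1:ℕ):ℝ)/J = ((k:ℝ)+1)/J := by push_cast; ring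
      rw [hcast]
      exact (ih hk.le).trans hpiece
  have := main J le_rfl
  rwa [div_self (ne_of_gt hJ')] at this

lemma ptwise (Δt : ℝ) (hΔt : 0 < Δt) (s t : ℝ) (u v w : E2) :
    (1/2) * (s^2 * ‖u‖^2) + Δt * (t^2 * ‖Δt⁻¹ • w‖^2 * ‖v‖^2) - (1/2) * (t^2 * ‖v‖^2)
    ≤ t^2 * ⟪Δt⁻¹ • w, w⟫ * ‖v‖^2 + t^2 * ⟪u, u - v⟫ + s * (s - t) * ‖u‖^2 := by
  have h1 : ⟪Δt⁻¹ • w, w⟫ = Δt⁻¹ * ‖w‖^2 := by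
    rw [real_inner_smul_left, real_inner_self_eq_norm_sq]
  have h2 : Δt * ‖Δt⁻¹ • w‖^2 = Δt⁻¹ * ‖w‖^2 := by
    rw [norm_smul, mul_pow]
    rw [Real.norm_eq_abs, abs_of_pos (inv_pos.mpr hΔt)]
    field_simp
  have h3 : ⟪u, u - v⟫ = ‖u‖^2 - ⟪u, v⟫ := by
    rw [inner_sub_right, real_inner_self_eq_norm_sq]
  have h5 : ‖u - v‖^2 = ‖u‖^2 - 2 * ⟪u, v⟫ + ‖v‖^2 := norm_sub_sq_real u v
  have h6 : Δt * (t^2 * ‖Δt⁻¹ • w‖^2 * ‖v‖^2) = t^2 * (Δt⁻¹ * ‖w‖^2) * ‖v‖^2 := by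
    linear_combination (t^2 * ‖v‖^2) * h2
  have hA : 0 ≤ t^2 * (‖u‖^2 - 2 * ⟪u, v⟫ + ‖v‖^2) := by rw [← h5]; positivity
  have hB : 0 ≤ (s - t)^2 * ‖u‖^2 := by positivity
  rw [h1, h3]
  nlinarith [hA, hB, h6]

theorem per_step_stability
    (J : ℕ) (hJ : 3 ≤ J) (Δt : ℝ) (hΔt : 0 < Δt)
    (Xm Xnew : ℝ → E2) (hXm : Xm ∈ Vh J) (hXnew : Xnew ∈ Vh J)
    (hscheme : ∀ η ∈ Vh J, Qform Δt Xm Xnew η = 0) :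
    (1/2) * (∫ ρ in (0:ℝ)..1, ⟪Xnew ρ, e1⟫^2 * ‖deriv Xnew ρ‖^2)
      + Δt * (∫ ρ in (0:ℝ)..1,
          ⟪Xm ρ, e1⟫^2 * ‖Δt⁻¹ • (Xnew ρ - Xm ρ)‖^2 * ‖deriv Xm ρ‖^2)
    ≤ (1/2) * (∫ ρ in (0:ℝ)..1, ⟪Xm ρ, e1⟫^2 * ‖deriv Xm ρ‖^2) := by
  have hJ0 : 0 < J := by omega
  have hJR : (0:ℝ) < J := by exact_mod_cast hJ0
  obtain ⟨hXmc, hXmp, hXmaff⟩ := hXm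
  obtain ⟨hXnc, hXnp, hXnaff⟩ := hXnew
  choose! am bm haffm using hXmaff
  choose! an bn haffn using hXnaff
  set η : ℝ → E2 := fun x => Xnew x - Xm x with hηdef
  have haffη : ∀ j : ℕ, j < J → ∀ ρ ∈ Set.Icc ((j:ℝ)/J) (((j:ℝ)+1)/J),
      η ρ = (an j - am j) + ρ • (bn j - bm j) := by
    intro j hj ρ hρ
    simp only [hηdef, haffn j hj ρ hρ, haffm j hj ρ hρ, smul_sub]
    abel
  have hηVh : η ∈ Vh J := ⟨hXnc.sub hXmc, hXnp.sub hXmp, fun j hj => ⟨_, _, haffη j hj⟩⟩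
  have h0 := hscheme η hηVh
  simp only [Qform] at h0
  have hcm : Continuous fun ρ => ⟪Xm ρ, e1⟫ := hXmc.inner continuous_const
  have hcn : Continuous fun ρ => ⟪Xnew ρ, e1⟫ := hXnc.inner continuous_const
  have hcw : Continuous fun ρ => Xnew ρ - Xm ρ := hXnc.sub hXmc
  have hcwn : Continuous fun ρ => ‖Δt⁻¹ • (Xnew ρ - Xm ρ)‖ := (hcw.const_smul Δt⁻¹).norm
  have hcin : Continuous fun ρ => ⟪Δt⁻¹ • (Xnew ρ - Xm ρ), Xnew ρ - Xm ρ⟫ :=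
    (hcw.const_smul Δt⁻¹).inner hcw
  have hcsub : Continuous fun ρ => ⟪Xnew ρ - Xm ρ, e1⟫ := hcw.inner continuous_const
  -- interval integrability of the four integrands
  have hiPm : IntervalIntegrable (fun ρ => ⟪Xm ρ, e1⟫^2 * ‖deriv Xm ρ‖^2) volume 0 1 := by
    apply integrable_pieces hJ0
    intro j hj
    exact ⟨fun ρ => ⟪Xm ρ, e1⟫^2 * ‖bm j‖^2, (hcm.pow 2).mul continuous_const,
      fun ρ hρ => by rw [deriv_affine (haffm j hj) hρ]⟩
  have hiPn : IntervalIntegrable (fun ρ => ⟪Xnew ρ, e1⟫^2 * ‖deriv Xnew ρ‖^2) volume 0 1 := by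
    apply integrable_pieces hJ0
    intro j hj
    exact ⟨fun ρ => ⟪Xnew ρ, e1⟫^2 * ‖bn j‖^2, (hcn.pow 2).mul continuous_const,
      fun ρ hρ => by rw [deriv_affine (haffn j hj) hρ]⟩
  have hiA : IntervalIntegrable
      (fun ρ => ⟪Xm ρ, e1⟫^2 * ‖Δt⁻¹ • (Xnew ρ - Xm ρ)‖^2 * ‖deriv Xm ρ‖^2) volume 0 1 := by
    apply integrable_pieces hJ0
    intro j hj
    exact ⟨fun ρ => ⟪Xm ρ, e1⟫^2 * ‖Δt⁻¹ • (Xnew ρ - Xm ρ)‖^2 * ‖bm j‖^2,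
      ((hcm.pow 2).mul (hcwn.pow 2)).mul continuous_const,
      fun ρ hρ => by rw [deriv_affine (haffm j hj) hρ]⟩
  have hiG : IntervalIntegrable
      (fun ρ => ⟪Xm ρ, e1⟫^2 * ⟪Δt⁻¹ • (Xnew ρ - Xm ρ), η ρ⟫ * ‖deriv Xm ρ‖^2
        + ⟪Xm ρ, e1⟫^2 * ⟪deriv Xnew ρ, deriv η ρ⟫
        + ⟪Xnew ρ, e1⟫ * ⟪η ρ, e1⟫ * ‖deriv Xnew ρ‖^2) volume 0 1 := by
    apply integrable_pieces hJ0
    intro j hj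
    refine ⟨fun ρ => ⟪Xm ρ, e1⟫^2 * ⟪Δt⁻¹ • (Xnew ρ - Xm ρ), Xnew ρ - Xm ρ⟫ * ‖bm j‖^2
        + ⟪Xm ρ, e1⟫^2 * ⟪bn j, bn j - bm j⟫
        + ⟪Xnew ρ, e1⟫ * ⟪Xnew ρ - Xm ρ, e1⟫ * ‖bn j‖^2,
      ((((hcm.pow 2).mul hcin).mul continuous_const).add
        ((hcm.pow 2).mul continuous_const)).add ((hcn.mul hcsub).mul continuous_const), ?_⟩
    intro ρ hρ
    rw [deriv_affine (haffm j hj) hρ, deriv_affine (haffn j hj) hρ,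
      deriv_affine (haffη j hj) hρ]
  -- a.e. on [0,1] the derivative of η is the difference of derivatives
  have hw : ∀ᵐ ρ ∂(volume.restrict (Set.Icc (0:ℝ) 1)),
      deriv η ρ = deriv Xnew ρ - deriv Xm ρ := by
    refine (MeasureTheory.ae_restrict_iff' measurableSet_Icc).mpr ?_
    have hknots : ∀ᵐ ρ : ℝ, ∀ j : ℕ, j ≤ J → ρ ≠ (j:ℝ)/J := by
      rw [MeasureTheory.ae_all_iff]
      intro j
      filter_upwards [ae_ne_real ((j:ℝ)/J)] with ρ h _
      exact h
    filter_upwards [hknots] with ρ hk hρ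
    have hne0 : ρ ≠ 0 := by have := hk 0 (Nat.zero_le J); simpa using this
    have h0ρ : 0 < ρ := lt_of_le_of_ne hρ.1 (Ne.symm hne0)
    have hne1 : ρ ≠ 1 := by have := hk J le_rfl; rwa [div_self hJR.ne'] at this
    have h1ρ : ρ < 1 := lt_of_le_of_ne hρ.2 hne1
    set n : ℕ := ⌊ρ * J⌋.toNat with hn
    have hnn : 0 ≤ ⌊ρ * (J:ℝ)⌋ := Int.floor_nonneg.mpr (by positivity)
    have hcastn : (n:ℝ) = ((⌊ρ * (J:ℝ)⌋ : ℤ) : ℝ) := by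
      rw [hn]; exact_mod_cast Int.toNat_of_nonneg hnn
    have hnle : (n:ℝ) ≤ ρ * J := by rw [hcastn]; exact Int.floor_le _
    have hlt : ρ * J < (n:ℝ) + 1 := by
      rw [hcastn]; exact_mod_cast Int.lt_floor_add_one (ρ * (J:ℝ))
    have hnJ : n < J := by
      have : (n:ℝ) < (J:ℝ) := lt_of_le_of_lt hnle (by nlinarith)
      exact_mod_cast this
    have hneq : ρ ≠ (n:ℝ)/J := hk n hnJ.le
    have h1 : (n:ℝ)/J ≤ ρ := by rw [div_le_iff₀ hJR]; linarith
    have hnlt : (n:ℝ)/J < ρ := lt_of_le_of_ne h1 (fun h => hneq h.symm)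
    have hρlt : ρ < ((n:ℝ)+1)/J := by rw [lt_div_iff₀ hJR]; linarith
    have hmem : ρ ∈ Set.Ioo ((n:ℝ)/J) (((n:ℝ)+1)/J) := ⟨hnlt, hρlt⟩
    rw [deriv_affine (haffη n hnJ) hmem, deriv_affine (haffn n hnJ) hmem,
      deriv_affine (haffm n hnJ) hmem]
  -- a.e. pointwise inequality
  have hle : (fun ρ => (1/2) * (⟪Xnew ρ, e1⟫^2 * ‖deriv Xnew ρ‖^2)
        + Δt * (⟪Xm ρ, e1⟫^2 * ‖Δt⁻¹ • (Xnew ρ - Xm ρ)‖^2 * ‖deriv Xm ρ‖^2)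
        - (1/2) * (⟪Xm ρ, e1⟫^2 * ‖deriv Xm ρ‖^2))
      ≤ᵐ[volume.restrict (Set.Icc (0:ℝ) 1)]
      (fun ρ => ⟪Xm ρ, e1⟫^2 * ⟪Δt⁻¹ • (Xnew ρ - Xm ρ), η ρ⟫ * ‖deriv Xm ρ‖^2
        + ⟪Xm ρ, e1⟫^2 * ⟪deriv Xnew ρ, deriv η ρ⟫
        + ⟪Xnew ρ, e1⟫ * ⟪η ρ, e1⟫ * ‖deriv Xnew ρ‖^2) := by
    filter_upwards [hw] with ρ hdη
    rw [hdη]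
    simp only [hηdef, hdη]
    rw [inner_sub_left]
    exact ptwise Δt hΔt ⟪Xnew ρ, e1⟫ ⟪Xm ρ, e1⟫ (deriv Xnew ρ) (deriv Xm ρ)
      (Xnew ρ - Xm ρ)
  have hiL : IntervalIntegrable (fun ρ => (1/2) * (⟪Xnew ρ, e1⟫^2 * ‖deriv Xnew ρ‖^2)
        + Δt * (⟪Xm ρ, e1⟫^2 * ‖Δt⁻¹ • (Xnew ρ - Xm ρ)‖^2 * ‖deriv Xm ρ‖^2)
        - (1/2) * (⟪Xm ρ, e1⟫^2 * ‖deriv Xm ρ‖^2)) volume 0 1 :=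
    ((hiPn.const_mul _).add (hiA.const_mul _)).sub (hiPm.const_mul _)
  have hmono := intervalIntegral.integral_mono_ae_restrict (μ := volume)
    zero_le_one hiL hiG hle
  rw [h0] at hmono
  rw [intervalIntegral.integral_sub ((hiPn.const_mul _).add (hiA.const_mul _))
      (hiPm.const_mul _),
    intervalIntegral.integral_add (hiPn.const_mul _) (hiA.const_mul _),
    intervalIntegral.integral_const_mul, intervalIntegral.integral_const_mul,
    intervalIntegral.integral_const_mul] at hmono
  linarith
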